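/- arXiv:2604.03001 — 4 statements merged into one kernel-verified Lean document; each statement's English description precedes it below -/
import Mathlib

section
/- Let X and Y be standard Borel spaces, and let P be a probability measure on X × Y with marginals P_X and P_Y. If there exists a σ-finite measure λ on Y such that P is absolutely continuous with respect to the product measure P_X ⊗ λ, then P is absolutely continuous with respect to P_X ⊗ P_Y. -/
open MeasureTheory

set_option maxHeartbeats 1000000

/-- If `P` on `X × Y` is absolutely continuous w.r.t. `P_X ⊗ λ` for some σ-finite `λ`,
then `P ≪ P_X ⊗ P_Y`. -/
theorem stmt0 {X Y : Type*} [MeasurableSpace X] [MeasurableSpace Y]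
    [StandardBorelSpace X] [StandardBorelSpace Y]
    (P : Measure (X × Y)) [IsProbabilityMeasure P]
    (lam : Measure Y) [SigmaFinite lam]
    (h : P ≪ P.fst.prod lam) : P ≪ P.fst.prod P.snd := by
  set μ := P.fst with hμ_def
  obtain ⟨f, hf, hP⟩ : ∃ f : X × Y → ENNReal, Measurable f ∧ (μ.prod lam).withDensity f = P :=
    ⟨P.rnDeriv (μ.prod lam), P.measurable_rnDeriv _, Measure.withDensity_rnDeriv_eq _ _ h⟩
  set g : Y → ENNReal := fun y => ∫⁻ x, f (x, y) ∂μ with hg_def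
  have hg : Measurable g := hf.lintegral_prod_left'
  -- key computation: P of a vertical strip
  have key : ∀ A : Set Y, MeasurableSet A → P (Set.univ ×ˢ A) = ∫⁻ y in A, g y ∂lam := by
    intro A hA
    rw [← hP, withDensity_apply _ (MeasurableSet.univ.prod hA),
      ← lintegral_indicator ((MeasurableSet.univ.prod hA)),
      lintegral_prod_symm _ (hf.indicator (MeasurableSet.univ.prod hA)).aemeasurable]
    rw [← lintegral_indicator hA]
    congr 1
    ext y
    by_cases hy : y ∈ A
    · simp only [Set.indicator_of_mem hy]
      refine lintegral_congr fun x => ?_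
      rw [Set.indicator_of_mem (by simp [hy])]
    · simp only [Set.indicator_of_notMem hy]
      rw [← lintegral_zero]
      refine lintegral_congr fun x => ?_
      rw [Set.indicator_of_notMem (by simp [hy])]
  have hsnd : P.snd = lam.withDensity g := by
    ext A hA
    rw [Measure.snd_apply hA, withDensity_apply _ hA, ← key A hA]
    congr 1
    ext p
    simp [Set.mem_prod]
  set B : Set Y := {y | g y = 0} with hB_def
  have hB : MeasurableSet B := hg (measurableSet_singleton 0)
  set T : Set (X × Y) := Set.univ ×ˢ B with hT_def
  have hT : MeasurableSet T := MeasurableSet.univ.prod hB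
  have hPT : P T = 0 := by
    rw [key B hB]
    calc ∫⁻ y in B, g y ∂lam = ∫⁻ y in B, 0 ∂lam := by
          refine setLIntegral_congr_fun hB (fun y hy => hy)
      _ = 0 := lintegral_zero
  refine Measure.AbsolutelyContinuous.mk fun s hs hs0 => ?_
  -- from hs0, a.e. x the slice of s is P.snd-null, hence lam-null off B
  rw [Measure.prod_apply hs] at hs0
  have hae : ∀ᵐ x ∂μ, P.snd (Prod.mk x ⁻¹' s) = 0 :=
    (lintegral_eq_zero_iff (measurable_measure_prodMk_left hs)).mp hs0
  have hdiff : (μ.prod lam) (s \ T) = 0 := by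
    rw [Measure.prod_apply (hs.diff hT)]
    rw [lintegral_eq_zero_iff (measurable_measure_prodMk_left (hs.diff hT))]
    filter_upwards [hae] with x hx
    rw [hsnd, withDensity_apply _ (measurable_prodMk_left hs)] at hx
    have h3 := (setLIntegral_eq_zero_iff (measurable_prodMk_left hs) hg).mp hx
    have hset : Prod.mk x ⁻¹' (s \ T) = (Prod.mk x ⁻¹' s) \ B := by
      ext y; simp [hT_def, Set.mem_prod]
    rw [hset]
    refine measure_mono_null (fun y hy => ?_) (ae_iff.mp h3)
    simp only [Set.mem_setOf_eq, Classical.not_imp]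
    exact ⟨hy.1, hy.2⟩
  have h2 : P (s \ T) = 0 := h hdiff
  have : P s ≤ P (s ∩ T) + P (s \ T) := measure_le_inter_add_diff P s T
  have h1 : P (s ∩ T) = 0 := measure_mono_null Set.inter_subset_right hPT
  simp only [h1, h2, add_zero, nonpos_iff_eq_zero] at this
  exact this
end

section
/- Let X and Y be standard Borel spaces, P a probability measure on X × Y with marginals P_X, P_Y, and let y ↦ P_{X|Y}(·, y) be a regular conditional distribution of the first coordinate given the second. If the set of y for which P_{X|Y}(·, y) is mutually singular with P_X has positive P_Y-measure, then there is no σ-finite measure λ on Y with P ≪ P_X ⊗ λ. -/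
open MeasureTheory ProbabilityTheory Set

/-- If the regular conditional distribution `κ y = P_{X|Y}(·, y)` is mutually singular
with the marginal `P_X` on a set of `y` of positive `P_Y`-measure, then no σ-finite
measure `λ` on `Y` satisfies `P ≪ P_X ⊗ λ`. -/
theorem stmt4 {X Y : Type*} [MeasurableSpace X] [MeasurableSpace Y]
    [StandardBorelSpace X] [StandardBorelSpace Y]
    (P : Measure (X × Y)) [IsProbabilityMeasure P]
    (κ : Kernel Y X) [IsMarkovKernel κ]
    (hdis : ∀ A B : Set _, MeasurableSet A → MeasurableSet B →
      P (A ×ˢ B) = ∫⁻ y in B, κ y A ∂P.snd)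
    (hsing : 0 < P.snd {y | κ y ⟂ₘ P.fst}) :
    ¬ ∃ lam : Measure Y, SigmaFinite lam ∧ P ≪ P.fst.prod lam := by
  rintro ⟨lam, hσ, hac⟩
  set η : Kernel Y X := Kernel.const Y P.fst with hη
  have hηy : ∀ y, η y = P.fst := fun y => Kernel.const_apply _ _
  set S : Set (Y × X) := Kernel.mutuallySingularSet κ η with hS
  set B : Set Y := {y | κ y ⟂ₘ P.fst} with hB
  have hBmeas : MeasurableSet B := by
    have h := Kernel.measurableSet_mutuallySingular κ η
    simp only [hη, Kernel.const_apply] at h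
    exact h
  have hSmeas : MeasurableSet S := Kernel.measurableSet_mutuallySingularSet κ η
  set E : Set (Y × X) := (B ×ˢ univ) ∩ S with hE
  have hEmeas : MeasurableSet E := (hBmeas.prod MeasurableSet.univ).inter hSmeas
  -- identify P.map Prod.swap with the composition-product P.snd ⊗ₘ κ
  have hρ : P.map Prod.swap = P.snd ⊗ₘ κ := by
    refine MeasureTheory.ext_of_generate_finite _ generateFrom_prod.symm isPiSystem_prod ?_ ?_
    · rintro _ ⟨s, hs, t, ht, rfl⟩
      rw [Measure.map_apply measurable_swap (hs.prod ht)]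
      have hpre : Prod.swap ⁻¹' (s ×ˢ t) = t ×ˢ s := by
        ext p; simp [Set.mem_prod, and_comm]
      rw [hpre, hdis t s ht hs, Measure.compProd_apply_prod hs ht]
    · rw [Measure.map_apply measurable_swap MeasurableSet.univ]
      simp
  -- slices of E
  have hslice1 : ∀ y ∈ B, Prod.mk y ⁻¹' E = Kernel.mutuallySingularSetSlice κ η y := by
    intro y hy
    ext x
    simp [hE, hS, Kernel.mutuallySingularSetSlice, Kernel.mutuallySingularSet, hy]
  have hslice2 : ∀ y ∉ B, Prod.mk y ⁻¹' E = ∅ := by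
    intro y hy
    ext x
    simp [hE, hy]
  -- the product measure gives E (swapped) measure zero
  have hzero : (P.fst.prod lam) (Prod.swap ⁻¹' E) = 0 := by
    have hmap : (lam.prod P.fst) E = (P.fst.prod lam) (Prod.swap ⁻¹' E) := by
      rw [← Measure.prod_swap, Measure.map_apply measurable_swap hEmeas]
    rw [← hmap, Measure.prod_apply hEmeas]
    have : ∀ y, P.fst (Prod.mk y ⁻¹' E) = 0 := by
      intro y
      by_cases hy : y ∈ B
      · rw [hslice1 y hy]
        have := Kernel.measure_mutuallySingularSetSlice κ η y
        rwa [hηy] at this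
      · rw [hslice2 y hy]; simp
    simp [this]
  -- but P gives it positive measure
  have hpos : 0 < P (Prod.swap ⁻¹' E) := by
    have hPE : P (Prod.swap ⁻¹' E) = (P.map Prod.swap) E := by
      rw [Measure.map_apply measurable_swap hEmeas]
    rw [hPE, hρ, Measure.compProd_apply hEmeas]
    have hone : ∀ y ∈ B, κ y (Prod.mk y ⁻¹' E) = 1 := by
      intro y hy
      rw [hslice1 y hy]
      have hms : κ y ⟂ₘ η y := by rw [hηy]; exact hy
      have h0 : κ y (Kernel.mutuallySingularSetSlice κ η y)ᶜ = 0 := by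
        rw [← Kernel.withDensity_rnDeriv_eq_zero_iff_measure_eq_zero,
          Kernel.withDensity_rnDeriv_eq_zero_iff_mutuallySingular]
        exact hms
      have := measure_add_measure_compl (μ := κ y)
        (Kernel.measurableSet_mutuallySingularSetSlice κ η y)
      rw [h0, add_zero] at this
      rw [this]
      simp
    calc 0 < P.snd B := hsing
    _ = ∫⁻ y in B, 1 ∂P.snd := by simp
    _ = ∫⁻ y in B, κ y (Prod.mk y ⁻¹' E) ∂P.snd := by
        refine setLIntegral_congr_fun hBmeas (fun y hy => ?_)
        rw [hone y hy]
    _ ≤ ∫⁻ y, κ y (Prod.mk y ⁻¹' E) ∂P.snd := setLIntegral_le_lintegral _ _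
  exact absurd (hac hzero) hpos.ne'
end

section
/- Let X, Y be standard Borel spaces and P a probability measure on X × Y with marginals P_X, P_Y and disintegration y ↦ P_{X|Y}(·, y). If P ≪ P_X ⊗ P_Y, then for P_Y-almost every y, the conditional measure P_{X|Y}(·, y) is absolutely continuous with respect to P_X, with density given by the Radon–Nikodym derivative dP/d(P_X ⊗ P_Y)(·, y). -/
open MeasureTheory ProbabilityTheory Set
open scoped ENNReal

/-- If `P ≪ P_X ⊗ P_Y`, then for `P_Y`-a.e. `y` the conditional measure `P_{X|Y}(·, y)`
is absolutely continuous with respect to `P_X`, with density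
`x ↦ dP/d(P_X ⊗ P_Y)(x, y)`. -/
theorem stmt5 {X Y : Type*} [MeasurableSpace X] [MeasurableSpace Y]
    [StandardBorelSpace X] [StandardBorelSpace Y]
    (P : Measure (X × Y)) [IsProbabilityMeasure P]
    (κ : Kernel Y X) [IsMarkovKernel κ]
    (hdis : ∀ A B : Set _, MeasurableSet A → MeasurableSet B →
      P (A ×ˢ B) = ∫⁻ y in B, κ y A ∂P.snd)
    (hac : P ≪ P.fst.prod P.snd) :
    ∀ᵐ y ∂P.snd, κ y ≪ P.fst ∧
      κ y = P.fst.withDensity (fun x => P.rnDeriv (P.fst.prod P.snd) (x, y)) := by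
  rcases isEmpty_or_nonempty X with hXe | hX
  · have h1 : P Set.univ = 1 := measure_univ
    have h2 : (Set.univ : Set (X × Y)) = ∅ :=
      Set.univ_eq_empty_iff.mpr ⟨fun p => hXe.false p.1⟩
    rw [h2] at h1; simp at h1
  set f : X × Y → ℝ≥0∞ := P.rnDeriv (P.fst.prod P.snd) with hfdef
  have hfm : Measurable f := Measure.measurable_rnDeriv _ _
  have hP : (P.fst.prod P.snd).withDensity f = P :=
    Measure.withDensity_rnDeriv_eq _ _ hac
  have hrect : ∀ A B : Set _, MeasurableSet A → MeasurableSet B →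
      P (A ×ˢ B) = ∫⁻ y in B, ∫⁻ x in A, f (x, y) ∂P.fst ∂P.snd := by
    intro A B hA hB
    conv_lhs => rw [← hP]
    rw [withDensity_apply _ (hA.prod hB), ← Measure.prod_restrict,
      lintegral_prod_symm _ hfm.aemeasurable]
  set g : Y → ℝ≥0∞ := fun y => ∫⁻ x, f (x, y) ∂P.fst with hgdef
  have hgm : Measurable g := Measurable.lintegral_prod_left (f := fun x y => f (x, y)) hfm
  have hg1 : g =ᵐ[P.snd] 1 := by
    refine ae_eq_of_forall_setLIntegral_eq_of_sigmaFinite hgm measurable_one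
      (fun B hB _ => ?_)
    have := (hrect Set.univ B MeasurableSet.univ hB).symm
    simp only [Measure.restrict_univ] at this
    rw [this]
    have h3 : (Set.univ : Set X) ×ˢ B = Prod.snd ⁻¹' B := by ext p; simp
    rw [h3, ← Measure.snd_apply hB]
    simp
  set g' : Y → X → ℝ≥0∞ := fun y x => if g y = 1 then f (x, y) else 1 with hg'def
  have hg'm : Measurable (Function.uncurry g') := by
    apply Measurable.ite
    · exact (hgm.comp measurable_fst) (measurableSet_singleton 1)
    · exact hfm.comp (measurable_snd.prodMk measurable_fst)
    · exact measurable_const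
  set η : Kernel Y X := Kernel.withDensity (Kernel.const Y P.fst) g' with hηdef
  have hηapp : ∀ y, η y = P.fst.withDensity (g' y) := by
    intro y
    rw [hηdef, Kernel.withDensity_apply _ hg'm, Kernel.const_apply]
  haveI : IsMarkovKernel η := by
    constructor
    intro y
    constructor
    rw [hηapp y, withDensity_apply _ MeasurableSet.univ, Measure.restrict_univ]
    by_cases hy : g y = 1
    · simp only [hg'def, hy, if_true]
      exact hy
    · simp [hg'def, hy]
  set ρ : Measure (Y × X) := P.map Prod.swap with hρdef
  haveI : IsProbabilityMeasure ρ := Measure.isProbabilityMeasure_map measurable_swap.aemeasurable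
  have hρfst : ρ.fst = P.snd := Measure.fst_map_swap
  have hρ_rect : ∀ s : Set Y, ∀ t : Set X, MeasurableSet s → MeasurableSet t →
      ρ (s ×ˢ t) = P (t ×ˢ s) := by
    intro s t hs ht
    rw [hρdef, Measure.map_apply measurable_swap (hs.prod ht)]
    congr 1
    ext p; simp [and_comm]
  have hρκ : ρ = ρ.fst ⊗ₘ κ := by
    refine ext_of_generate_finite _ generateFrom_prod.symm isPiSystem_prod (fun u hu => ?_)
      (by simp)
    rcases hu with ⟨s, hs, t, ht, rfl⟩
    rw [Measure.compProd_apply_prod hs ht, hρ_rect s t hs ht, hdis t s ht hs, hρfst]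
  have hρη : ρ = ρ.fst ⊗ₘ η := by
    refine ext_of_generate_finite _ generateFrom_prod.symm isPiSystem_prod (fun u hu => ?_)
      (by simp)
    rcases hu with ⟨s, hs, t, ht, rfl⟩
    rw [Measure.compProd_apply_prod hs ht, hρ_rect s t hs ht, hrect t s ht hs, hρfst]
    refine lintegral_congr_ae (ae_restrict_of_ae ?_)
    filter_upwards [hg1] with y hy
    rw [hηapp y, withDensity_apply _ ht]
    simp only [hg'def, hy, Pi.one_apply, if_true]
  have huniq1 : ∀ᵐ y ∂ρ.fst, κ y = ρ.condKernel y :=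
    eq_condKernel_of_measure_eq_compProd κ hρκ
  have huniq2 : ∀ᵐ y ∂ρ.fst, η y = ρ.condKernel y :=
    eq_condKernel_of_measure_eq_compProd η hρη
  rw [hρfst] at huniq1 huniq2
  filter_upwards [huniq1, huniq2, hg1] with y h1 h2 hy
  have hκη : κ y = P.fst.withDensity (fun x => f (x, y)) := by
    rw [h1, ← h2, hηapp y]
    congr 1
    funext x
    simp only [hg'def, hy, Pi.one_apply, if_true]
  exact ⟨hκη ▸ withDensity_absolutelyContinuous _ _, hκη⟩
end

section
/- Let μ be a probability measure on a measurable space X and let H : X → (-∞, ∞] be measurable with 0 < Z := ∫ exp(-H) dμ < ∞. Define the Gibbs measure γ(A) := Z⁻¹ ∫_A exp(-H) dμ. Then for every probability measure ρ on X with ρ ≪ μ and ∫ H dρ well-defined, the free energy satisfies relEntropy(ρ ‖ μ) + ∫ H dρ ≥ -log Z, with equality if and only if ρ = γ. -/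
open MeasureTheory
open scoped Classical ENNReal

/-- Relative entropy (KL divergence) of `ρ` with respect to `μ`, valued in `EReal`:
`∫ log(dρ/dμ) dρ` when `ρ ≪ μ` and the log-likelihood ratio is integrable, `+∞` otherwise. -/

noncomputable def relEntropy {X : Type*} [MeasurableSpace X] (ρ μ : Measure X) : EReal :=
  if ρ ≪ μ ∧ Integrable (llr ρ μ) ρ then ((∫ x, llr ρ μ x ∂ρ : ℝ) : EReal) else ⊤

lemma gibbs_aux (t : ℝ) (ht : 0 ≤ t) :
    t - 1 ≤ t * Real.log t ∧ (t * Real.log t = t - 1 → t = 1) := by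
  rcases eq_or_lt_of_le ht with h0 | h0
  · simp [← h0]
  constructor
  · have h := Real.log_le_sub_one_of_pos (inv_pos.mpr h0)
    rw [Real.log_inv] at h
    have h2 : t * (-Real.log t) ≤ t * (t⁻¹ - 1) := by
      exact mul_le_mul_of_nonneg_left h ht
    rw [mul_sub, mul_inv_cancel₀ h0.ne'] at h2
    nlinarith
  · intro heq
    by_contra hne
    have h := Real.log_lt_sub_one_of_pos (inv_pos.mpr h0) (by
      simp only [ne_eq, inv_eq_one]; exact hne)
    rw [Real.log_inv] at h
    have h2 : t * (-Real.log t) < t * (t⁻¹ - 1) := by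
      exact (mul_lt_mul_of_pos_left h h0)
    rw [mul_sub, mul_inv_cancel₀ h0.ne'] at h2
    nlinarith

/-- Gibbs variational principle: for `H : X → (-∞, ∞]` with `Z = ∫ exp(-H) dμ ∈ (0, ∞)`,
every probability measure `ρ ≪ μ` with well-defined energy satisfies
`relEntropy(ρ‖μ) + ∫ H dρ ≥ -log Z`, with equality iff `ρ` is the Gibbs measure
`Z⁻¹ exp(-H) dμ`. -/
theorem stmt6 {X : Type*} [MeasurableSpace X]
    (μ : Measure X) [IsProbabilityMeasure μ]
    (H : X → EReal) (hH : Measurable H) (hbot : ∀ x, H x ≠ ⊥)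
    (hZ0 : 0 < ∫⁻ x, EReal.exp (-(H x)) ∂μ)
    (hZtop : ∫⁻ x, EReal.exp (-(H x)) ∂μ ≠ ⊤)
    (ρ : Measure X) [IsProbabilityMeasure ρ] (hac : ρ ≪ μ)
    (htop : ∀ᵐ x ∂ρ, H x ≠ ⊤)
    (hint : Integrable (fun x => (H x).toReal) ρ) :
    ((-(Real.log (∫⁻ x, EReal.exp (-(H x)) ∂μ).toReal) : ℝ) : EReal) ≤
      relEntropy ρ μ + ((∫ x, (H x).toReal ∂ρ : ℝ) : EReal) ∧
    (relEntropy ρ μ + ((∫ x, (H x).toReal ∂ρ : ℝ) : EReal) =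
        ((-(Real.log (∫⁻ x, EReal.exp (-(H x)) ∂μ).toReal) : ℝ) : EReal) ↔
      ρ = (∫⁻ x, EReal.exp (-(H x)) ∂μ)⁻¹ •
        μ.withDensity (fun x => EReal.exp (-(H x)))) := by
  set e : X → ℝ≥0∞ := fun x => EReal.exp (-(H x)) with he_def
  have he : Measurable e := hH.neg.ereal_exp
  set Z : ℝ≥0∞ := ∫⁻ x, e x ∂μ with hZ_def
  set γ : Measure X := Z⁻¹ • μ.withDensity e with hγ_def
  have hZne : Z ≠ 0 := hZ0.ne'
  have hZtr : 0 < Z.toReal := ENNReal.toReal_pos hZne hZtop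
  have hγd : γ = μ.withDensity (fun x => Z⁻¹ * e x) := by
    rw [hγ_def, ← withDensity_smul _ he]; rfl
  have hmeas2 : Measurable (fun x => Z⁻¹ * e x) := he.const_mul _
  have hγuniv : γ Set.univ = 1 := by
    rw [hγ_def, Measure.smul_apply, smul_eq_mul, withDensity_apply _ MeasurableSet.univ,
      setLIntegral_univ, ← hZ_def, ENNReal.inv_mul_cancel hZne hZtop]
  haveI hγprob : IsProbabilityMeasure γ := ⟨hγuniv⟩
  -- ρ ≪ γ
  have hρtope : ρ {x | e x = 0} = 0 := by
    have : {x | e x = 0} = {x | H x = ⊤} := by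
      ext x
      simp only [Set.mem_setOf_eq, he_def, EReal.exp_eq_zero_iff, EReal.neg_eq_bot_iff]
    rw [this]
    simpa only [ae_iff, ne_eq, not_not] using htop
  have hργ : ρ ≪ γ := by
    intro A hA
    refine le_antisymm ?_ zero_le
    rw [hγd, withDensity_apply_eq_zero hmeas2] at hA
    have hset : {x | Z⁻¹ * e x ≠ 0} = {x | e x ≠ 0} := by
      ext x
      simp [mul_eq_zero, ENNReal.inv_eq_zero, hZtop]
    rw [hset] at hA
    have h1 : ρ ({x | e x ≠ 0} ∩ A) = 0 := hac hA
    have hsub : A ⊆ ({x | e x ≠ 0} ∩ A) ∪ {x | e x = 0} := by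
      intro x hx
      by_cases hex : e x = 0
      · exact Or.inr hex
      · exact Or.inl ⟨hex, hx⟩
    calc ρ A ≤ ρ (({x | e x ≠ 0} ∩ A) ∪ {x | e x = 0}) := measure_mono hsub
      _ ≤ ρ ({x | e x ≠ 0} ∩ A) + ρ {x | e x = 0} := measure_union_le _ _
      _ = 0 := by rw [h1, hρtope, add_zero]
  -- rnDeriv of γ wrt μ
  have h_rnγμ : γ.rnDeriv μ =ᵐ[μ] fun x => Z⁻¹ * e x := by
    rw [hγd]; exact Measure.rnDeriv_withDensity μ hmeas2
  have h_chain : ∀ᵐ x ∂μ, ρ.rnDeriv γ x * γ.rnDeriv μ x = ρ.rnDeriv μ x := by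
    filter_upwards [Measure.rnDeriv_mul_rnDeriv hργ (κ := μ)] with x hx
    exact hx
  -- the key pointwise identity for llr
  have hkey : llr ρ γ =ᵐ[ρ] fun x => llr ρ μ x + (H x).toReal + Real.log Z.toReal := by
    filter_upwards [hac.ae_le h_chain, hac.ae_le h_rnγμ, Measure.rnDeriv_pos hργ,
      hργ.ae_le (Measure.rnDeriv_lt_top ρ γ), Measure.rnDeriv_pos hac,
      hac.ae_le (Measure.rnDeriv_lt_top ρ μ), htop] with x hchain hrn hpos hlt hpos' hlt' hxtop
    have hxreal : H x = ((H x).toReal : EReal) := (EReal.coe_toReal hxtop (hbot x)).symm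
    have hex : e x = ENNReal.ofReal (Real.exp (-(H x).toReal)) := by
      rw [he_def]
      simp only
      rw [hxreal, ← EReal.coe_neg, EReal.exp_coe, EReal.toReal_coe]
    have hb : ρ.rnDeriv μ x = ρ.rnDeriv γ x * (Z⁻¹ * e x) := by
      rw [← hchain, hrn]
    have hAne : (ρ.rnDeriv γ x).toReal ≠ 0 := (ENNReal.toReal_pos hpos.ne' hlt.ne).ne'
    have hb' : (ρ.rnDeriv μ x).toReal
        = (ρ.rnDeriv γ x).toReal * (Z.toReal⁻¹ * Real.exp (-(H x).toReal)) := by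
      rw [hb, ENNReal.toReal_mul, ENNReal.toReal_mul, ENNReal.toReal_inv, hex,
        ENNReal.toReal_ofReal (Real.exp_nonneg _)]
    simp only [llr]
    rw [hb', Real.log_mul hAne (by positivity), Real.log_mul (by positivity) (Real.exp_ne_zero _),
      Real.log_inv, Real.log_exp]
    ring
  -- integrability transfer
  have h_trans : Integrable (llr ρ μ) ρ ↔ Integrable (llr ρ γ) ρ := by
    constructor
    · intro h
      have h1 : Integrable (fun x => llr ρ μ x + (H x).toReal + Real.log Z.toReal) ρ :=
        (h.add hint).add (integrable_const _)
      exact h1.congr hkey.symm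
    · intro h
      have : Integrable (fun x => llr ρ γ x - (H x).toReal - Real.log Z.toReal) ρ :=
        (h.sub hint).sub (integrable_const _)
      refine this.congr ?_
      filter_upwards [hkey] with x hx
      rw [hx]; ring
  by_cases hi : Integrable (llr ρ μ) ρ
  · -- finite relative entropy case
    have hre : relEntropy ρ μ = ((∫ x, llr ρ μ x ∂ρ : ℝ) : EReal) := if_pos ⟨hac, hi⟩
    have hllrγ : Integrable (llr ρ γ) ρ := h_trans.mp hi
    set D : ℝ := ∫ x, llr ρ γ x ∂ρ with hD_def
    have hIγ : D = (∫ x, llr ρ μ x ∂ρ) + (∫ x, (H x).toReal ∂ρ) + Real.log Z.toReal := by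
      have h1 : Integrable (fun x => llr ρ μ x + (H x).toReal) ρ := hi.add hint
      rw [hD_def, integral_congr_ae hkey, integral_add h1 (integrable_const _),
        integral_add hi hint, integral_const, probReal_univ, one_smul]
    -- nonnegativity of D and equality iff ρ = γ
    set g : X → ℝ := fun x => (ρ.rnDeriv γ x).toReal with hg_def
    have hgm : Measurable g := (Measure.measurable_rnDeriv ρ γ).ennreal_toReal
    have h_int_g : Integrable g γ := by
      refine integrable_toReal_of_lintegral_ne_top
        (Measure.measurable_rnDeriv ρ γ).aemeasurable ?_
      rw [Measure.lintegral_rnDeriv hργ]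
      exact measure_ne_top ρ _
    have h_g_int : ∫ x, g x ∂γ = 1 := by
      rw [hg_def]
      rw [Measure.integral_toReal_rnDeriv hργ]
      simp
    have h_int_gl : Integrable (fun x => g x * llr ρ γ x) γ := by
      have := (integrable_rnDeriv_smul_iff (f := llr ρ γ) hργ).mpr hllrγ
      simpa [smul_eq_mul] using this
    have h_eq : ∫ x, g x * llr ρ γ x ∂γ = D := by
      have := integral_rnDeriv_smul (f := llr ρ γ) hργ
      simpa [smul_eq_mul] using this
    have h_llr_g : ∀ x, llr ρ γ x = Real.log (g x) := fun x => rfl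
    have h_ptwise : ∀ x, g x - 1 ≤ g x * llr ρ γ x := by
      intro x
      rw [h_llr_g]
      exact (gibbs_aux (g x) ENNReal.toReal_nonneg).1
    have hD0 : 0 ≤ D := by
      rw [← h_eq]
      have hle : ∫ x, (g x - 1) ∂γ ≤ ∫ x, g x * llr ρ γ x ∂γ :=
        integral_mono (h_int_g.sub (integrable_const 1)) h_int_gl h_ptwise
      rw [integral_sub h_int_g (integrable_const 1), h_g_int, integral_const, probReal_univ,
        one_smul] at hle
      linarith
    have hDiff : D = 0 ↔ ρ = γ := by
      constructor
      · intro hD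
        have hsub_int : Integrable (fun x => g x - 1) γ := h_int_g.sub (integrable_const 1)
        have hφ_int : Integrable (fun x => g x * llr ρ γ x - (g x - 1)) γ :=
          h_int_gl.sub hsub_int
        have hφ_integral : ∫ x, (g x * llr ρ γ x - (g x - 1)) ∂γ = 0 := by
          rw [integral_sub h_int_gl hsub_int,
            integral_sub h_int_g (integrable_const 1), h_g_int, integral_const, probReal_univ,
            one_smul, h_eq, hD]
          ring
        have hφ0 : (fun x => g x * llr ρ γ x - (g x - 1)) =ᵐ[γ] 0 :=
          (integral_eq_zero_iff_of_nonneg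
            (fun x => by have := h_ptwise x; simp only [Pi.zero_apply]; linarith)
            hφ_int).mp hφ_integral
        have hg1 : ∀ᵐ x ∂γ, ρ.rnDeriv γ x = 1 := by
          filter_upwards [hφ0, Measure.rnDeriv_lt_top ρ γ] with x hx hlt
          simp only [Pi.zero_apply] at hx
          have hgx : g x = 1 := by
            apply (gibbs_aux (g x) ENNReal.toReal_nonneg).2
            rw [← h_llr_g]
            linarith
          have hgx' : (ρ.rnDeriv γ x).toReal = 1 := hgx
          have h2 := ENNReal.ofReal_toReal hlt.ne
          rw [← h2, hgx']
          simp
        calc ρ = γ.withDensity (ρ.rnDeriv γ) := (Measure.withDensity_rnDeriv_eq ρ γ hργ).symm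
          _ = γ.withDensity 1 := withDensity_congr_ae hg1
          _ = γ := by simp
      · intro hργeq
        have hllr0 : llr ρ γ =ᵐ[ρ] 0 := by
          rw [hργeq]
          filter_upwards [Measure.rnDeriv_self γ] with x hx
          simp only [llr, Pi.zero_apply]
          rw [show γ.rnDeriv γ x = 1 from hx]
          simp
        rw [hD_def, integral_congr_ae hllr0]
        simp
    constructor
    · rw [hre, ← EReal.coe_add]
      rw [EReal.coe_le_coe_iff]
      have : (∫ x, llr ρ μ x ∂ρ) + (∫ x, (H x).toReal ∂ρ) = D - Real.log Z.toReal := by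
        rw [hIγ]; ring
      rw [this]
      linarith
    · rw [hre, ← EReal.coe_add, EReal.coe_eq_coe_iff]
      have heq2 : (∫ x, llr ρ μ x ∂ρ) + (∫ x, (H x).toReal ∂ρ) = D - Real.log Z.toReal := by
        rw [hIγ]; ring
      rw [heq2]
      constructor
      · intro h
        rw [← hDiff]
        linarith
      · intro h
        rw [hDiff.mpr h]
        ring
  · -- infinite relative entropy case
    have hre : relEntropy ρ μ = ⊤ := if_neg (fun h => hi h.2)
    rw [hre]
    have htopadd : (⊤ : EReal) + ((∫ x, (H x).toReal ∂ρ : ℝ) : EReal) = ⊤ :=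
      EReal.top_add_coe _
    rw [htopadd]
    refine ⟨le_top, ?_⟩
    constructor
    · intro h
      exact absurd h.symm (EReal.coe_ne_top _)
    · intro hργeq
      exfalso
      apply hi
      rw [h_trans]
      have hργeq' : ρ = γ := hργeq
      have hllr0 : llr ρ γ =ᵐ[ρ] 0 := by
        rw [hργeq']
        filter_upwards [Measure.rnDeriv_self γ] with x hx
        simp only [llr, Pi.zero_apply]
        rw [show γ.rnDeriv γ x = 1 from hx]
        simp
      exact (integrable_const (0 : ℝ)).congr hllr0.symm
end
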